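/- arXiv:1501.07812 — 6 statements merged into one kernel-verified Lean document; each statement's English description precedes it below -/
import Mathlib

section
/- Let Q ∈ ℂ^{n×n} be a unitary matrix that is upper Hessenberg. Then Q is (1,1)-quasiseparable: rank(Q[i+1:n, 1:i]) ≤ 1 and rank(Q[1:i, i+1:n]) ≤ 1 for every i = 1,…,n−1. -/
open Matrix BigOperators

/-- `A` is lower-quasiseparable of rank `k`:
`rank (A[i+1:n, 1:i]) ≤ k` for every `i = 1, …, n-1` (MATLAB notation). -/
noncomputable def lowQS {n : ℕ} (k : ℕ) (A : Matrix (Fin n) (Fin n) ℂ) : Prop :=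
  ∀ i : ℕ, ∀ _hi : 0 < i, ∀ _hin : i < n,
    (Matrix.of fun (p : Fin (n - i)) (q : Fin i) =>
      A ⟨i + p.1, by have := p.2; omega⟩ ⟨q.1, by have := q.2; omega⟩).rank ≤ k

/-- `A` is upper-quasiseparable of rank `k`:
`rank (A[1:i, i+1:n]) ≤ k` for every `i = 1, …, n-1` (MATLAB notation). -/
noncomputable def upQS {n : ℕ} (k : ℕ) (A : Matrix (Fin n) (Fin n) ℂ) : Prop :=
  ∀ i : ℕ, ∀ _hi : 0 < i, ∀ _hin : i < n,
    (Matrix.of fun (p : Fin i) (q : Fin (n - i)) =>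
      A ⟨p.1, by have := p.2; omega⟩ ⟨i + q.1, by have := q.2; omega⟩).rank ≤ k

/-- A matrix all of whose rows except possibly one vanish has rank at most `1`. -/
lemma aux_rank_le_one_of_row {a b : ℕ} (M : Matrix (Fin a) (Fin b) ℂ) (p0 : Fin a)
    (h : ∀ p q, p ≠ p0 → M p q = 0) : M.rank ≤ 1 := by
  have hrange : LinearMap.range M.mulVecLin ≤ (ℂ ∙ (Pi.single p0 1 : Fin a → ℂ)) := by
    rintro y ⟨x, rfl⟩
    refine Submodule.mem_span_singleton.2 ⟨M.mulVec x p0, ?_⟩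
    funext p
    by_cases hp : p = p0
    · subst hp; simp [Pi.single_apply]
    · simp only [Pi.smul_apply, Pi.single_apply, if_neg hp, smul_zero]
      simp only [Matrix.mulVecLin_apply, Matrix.mulVec, dotProduct]
      exact (Finset.sum_eq_zero fun q _ => by rw [h p q hp, zero_mul]).symm
  calc M.rank ≤ Module.finrank ℂ (ℂ ∙ (Pi.single p0 1 : Fin a → ℂ)) :=
        Submodule.finrank_mono hrange
    _ ≤ 1 := by
        by_cases hv : (Pi.single p0 1 : Fin a → ℂ) = 0
        · rw [hv, Submodule.span_zero_singleton, finrank_bot]; omega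
        · rw [finrank_span_singleton hv]

/-- If the kernel of `E` injects into the kernel of `B` (via `M'`, with left inverse `N'`
on that kernel), then `rank B ≤ rank E`. -/
lemma aux_rank_le {a b : ℕ} (B E : Matrix (Fin a) (Fin b) ℂ)
    (M' : Matrix (Fin b) (Fin b) ℂ) (N' : Matrix (Fin b) (Fin b) ℂ)
    (hB : ∀ x : Fin b → ℂ, E.mulVec x = 0 → B.mulVec (M'.mulVec x) = 0)
    (hN : ∀ x : Fin b → ℂ, E.mulVec x = 0 → N'.mulVec (M'.mulVec x) = x) :
    B.rank ≤ E.rank := by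
  have hker : Module.finrank ℂ (LinearMap.ker E.mulVecLin) ≤
      Module.finrank ℂ (LinearMap.ker B.mulVecLin) := by
    let φ : LinearMap.ker E.mulVecLin →ₗ[ℂ] LinearMap.ker B.mulVecLin :=
      LinearMap.codRestrict _ (M'.mulVecLin ∘ₗ (LinearMap.ker E.mulVecLin).subtype)
        (fun x => by
          simp only [LinearMap.mem_ker, LinearMap.comp_apply, Matrix.mulVecLin_apply,
            Submodule.subtype_apply]
          exact hB x.1 x.2)
    have hφ : Function.Injective φ := by
      intro x y hxy
      have h1 : M'.mulVec x.1 = M'.mulVec y.1 := congrArg Subtype.val hxy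
      have h2 : N'.mulVec (M'.mulVec x.1) = N'.mulVec (M'.mulVec y.1) := by rw [h1]
      rw [hN x.1 x.2, hN y.1 y.2] at h2
      exact Subtype.ext h2
    exact LinearMap.finrank_le_finrank_of_injective hφ
  have rB := LinearMap.finrank_range_add_finrank_ker B.mulVecLin
  have rE := LinearMap.finrank_range_add_finrank_ker E.mulVecLin
  have hBr : B.rank = Module.finrank ℂ (LinearMap.range B.mulVecLin) := rfl
  have hEr : E.rank = Module.finrank ℂ (LinearMap.range E.mulVecLin) := rfl
  simp only [Module.finrank_pi, Fintype.card_fin] at rB rE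
  omega

/-- Splitting a sum over `Fin n` at position `i`. -/
lemma aux_sum_split {i m n : ℕ} (h : i + m = n) (g : Fin n → ℂ) :
    ∑ k, g k = (∑ p : Fin i, g ⟨p.1, by omega⟩) + ∑ q : Fin m, g ⟨i + q.1, by omega⟩ := by
  subst h
  rw [Fin.sum_univ_add]
  congr 1

/-- A unitary upper Hessenberg matrix is `(1,1)`-quasiseparable. -/
theorem stmt_5 (n : ℕ) (Q : Matrix (Fin n) (Fin n) ℂ)
    (hQ : Q ∈ Matrix.unitaryGroup (Fin n) ℂ)
    (hHess : ∀ i j : Fin n, (j : ℕ) + 1 < (i : ℕ) → Q i j = 0) :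
    lowQS 1 Q ∧ upQS 1 Q := by
  have hU : Q * Qᴴ = 1 := by
    have := Matrix.mem_unitaryGroup_iff.mp hQ
    rwa [Matrix.star_eq_conjTranspose] at this
  -- the lower block has rank ≤ 1 (Hessenberg structure alone)
  have hlow : ∀ i : ℕ, ∀ _hi : 0 < i, ∀ _hin : i < n,
      (Matrix.of fun (p : Fin (n - i)) (q : Fin i) =>
        Q ⟨i + p.1, by have := p.2; omega⟩ ⟨q.1, by have := q.2; omega⟩).rank ≤ 1 := by
    intro i hi hin
    apply aux_rank_le_one_of_row _ (⟨0, by omega⟩ : Fin (n - i))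
    intro p q hp
    simp only [Matrix.of_apply]
    apply hHess
    have hp0 : p.1 ≠ 0 := fun h => hp (Fin.ext h)
    have := q.2
    simp only []
    omega
  refine ⟨hlow, ?_⟩
  -- the upper block
  intro i hi hin
  have him : i + (n - i) = n := by omega
  set C : Matrix (Fin (n - i)) (Fin i) ℂ :=
    Matrix.of fun (p : Fin (n - i)) (q : Fin i) =>
      Q ⟨i + p.1, by have := p.2; omega⟩ ⟨q.1, by have := q.2; omega⟩ with hC
  set B : Matrix (Fin i) (Fin (n - i)) ℂ :=
    Matrix.of fun (p : Fin i) (q : Fin (n - i)) =>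
      Q ⟨p.1, by have := p.2; omega⟩ ⟨i + q.1, by have := q.2; omega⟩ with hB
  set A : Matrix (Fin i) (Fin i) ℂ :=
    Matrix.of fun (p : Fin i) (q : Fin i) =>
      Q ⟨p.1, by have := p.2; omega⟩ ⟨q.1, by have := q.2; omega⟩ with hA
  set D : Matrix (Fin (n - i)) (Fin (n - i)) ℂ :=
    Matrix.of fun (p : Fin (n - i)) (q : Fin (n - i)) =>
      Q ⟨i + p.1, by have := p.2; omega⟩ ⟨i + q.1, by have := q.2; omega⟩ with hD
  have h1 : C * Cᴴ + D * Dᴴ = 1 := by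
    ext a b
    have e := congrFun (congrFun hU ⟨i + a.1, by have := a.2; omega⟩)
      ⟨i + b.1, by have := b.2; omega⟩
    rw [Matrix.mul_apply] at e
    rw [aux_sum_split him (fun k => Q ⟨i + a.1, by have := a.2; omega⟩ k *
      Qᴴ k ⟨i + b.1, by have := b.2; omega⟩)] at e
    simp only [Matrix.add_apply, Matrix.mul_apply, Matrix.conjTranspose_apply,
      Matrix.one_apply, hC, hD, Matrix.of_apply] at e ⊢
    rw [e]
    by_cases hab : a = b
    · rw [if_pos hab, if_pos (by rw [hab])]
    · rw [if_neg hab, if_neg ?_]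
      intro h
      exact hab (Fin.ext (by have := congrArg Fin.val h; simp only [] at this; omega))
  have h2 : A * Cᴴ + B * Dᴴ = 0 := by
    ext a b
    have e := congrFun (congrFun hU ⟨a.1, by have := a.2; omega⟩)
      ⟨i + b.1, by have := b.2; omega⟩
    rw [Matrix.mul_apply] at e
    rw [aux_sum_split him (fun k => Q ⟨a.1, by have := a.2; omega⟩ k *
      Qᴴ k ⟨i + b.1, by have := b.2; omega⟩)] at e
    simp only [Matrix.add_apply, Matrix.mul_apply, Matrix.conjTranspose_apply,
      Matrix.one_apply, Matrix.zero_apply, hA, hB, hC, hD, Matrix.of_apply] at e ⊢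
    rw [e, if_neg ?_]
    intro h
    have := congrArg Fin.val h
    simp only [] at this
    have := a.2
    omega
  have hCrank : C.rank ≤ 1 := hlow i hi hin
  have hE : Cᴴ.rank = C.rank := by open ComplexOrder in exact Matrix.rank_conjTranspose C
  refine le_trans (le_trans (aux_rank_le B Cᴴ Dᴴ D ?_ ?_) hE.le) hCrank
  · intro x hx
    have hBD : B * Dᴴ = -(A * Cᴴ) := eq_neg_of_add_eq_zero_left (by rw [add_comm]; exact h2)
    rw [Matrix.mulVec_mulVec, hBD, Matrix.neg_mulVec, ← Matrix.mulVec_mulVec, hx,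
      Matrix.mulVec_zero, neg_zero]
  · intro x hx
    have hDD : D * Dᴴ = 1 - C * Cᴴ := by
      rw [eq_sub_iff_add_eq, add_comm]; exact h1
    rw [Matrix.mulVec_mulVec, hDD, Matrix.sub_mulVec, Matrix.one_mulVec,
      ← Matrix.mulVec_mulVec, hx, Matrix.mulVec_zero, sub_zero]
end

section
/- Let n > k ≥ 1, let Z ∈ ℂ^{k×k} be arbitrary, let D ∈ ℂ^{(n−k)×(n−k)} be diagonal, and set S = Z ⊕ D (the block diagonal matrix with blocks Z and D). Then for every A ∈ ℂ^{n×n} there exists W ∈ ℂ^{k×k} such that t(SAS^*) − S t(A) S^* = W ⊕ 0_{n−k}, where 0_{n−k} is the (n−k)×(n−k) zero matrix. In particular this holds when D is the identity I_{n−k}. -/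
open Matrix BigOperators

/-- The operator `t`: `t(A)_{ij} = A_{ij}` for `i > j`, `conj (A_{ji})` for
`i < j`, and `0` on the diagonal. -/
noncomputable def tOp {n : ℕ} (A : Matrix (Fin n) (Fin n) ℂ) :
    Matrix (Fin n) (Fin n) ℂ :=
  Matrix.of fun i j =>
    if j < i then A i j else if i < j then (starRingEnd ℂ) (A j i) else 0

/-- For `S = Z ⊕ D` with `Z ∈ ℂ^{k×k}` arbitrary and `D` diagonal of size
`n-k`, the residual `t(SASᴴ) - S t(A) Sᴴ` is of the form `W ⊕ 0_{n-k}`. -/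
theorem stmt_7 (n k : ℕ) (hk : 1 ≤ k) (hkn : k < n)
    (Z : Matrix (Fin k) (Fin k) ℂ) (d : Fin n → ℂ)
    (A : Matrix (Fin n) (Fin n) ℂ) :
    let S : Matrix (Fin n) (Fin n) ℂ := Matrix.of fun p q =>
      if hp : (p : ℕ) < k then
        (if hq : (q : ℕ) < k then Z ⟨p, hp⟩ ⟨q, hq⟩ else 0)
      else if p = q then d p else 0
    ∃ W : Matrix (Fin k) (Fin k) ℂ,
      ∀ p q : Fin n,
        (tOp (S * A * Sᴴ) - S * tOp A * Sᴴ) p q =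
          if hp : (p : ℕ) < k then
            (if hq : (q : ℕ) < k then W ⟨p, hp⟩ ⟨q, hq⟩ else 0)
          else 0 := by
  intro S
  have hS_hi : ∀ (p i : Fin n), ¬ (p : ℕ) < k → S p i = if p = i then d p else 0 := by
    intro p i hp
    simp only [S, Matrix.of_apply, dif_neg hp]
  have hS_lo0 : ∀ (p i : Fin n), (p : ℕ) < k → ¬ (i : ℕ) < k → S p i = 0 := by
    intro p i hp hi
    simp only [S, Matrix.of_apply, dif_pos hp, dif_neg hi]
  have row : ∀ (M : Matrix (Fin n) (Fin n) ℂ) (p : Fin n), ¬ (p : ℕ) < k →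
      ∀ j, (S * M) p j = d p * M p j := by
    intro M p hp j
    rw [mul_apply]
    rw [Finset.sum_congr rfl (fun i _ => by rw [hS_hi p i hp, ite_mul, zero_mul])]
    rw [Finset.sum_ite_eq]
    simp
  have col : ∀ (M : Matrix (Fin n) (Fin n) ℂ) (q : Fin n), ¬ (q : ℕ) < k →
      ∀ p, (M * Sᴴ) p q = M p q * (starRingEnd ℂ) (d q) := by
    intro M q hq p
    rw [mul_apply]
    rw [Finset.sum_congr rfl (fun j _ => by
      rw [conjTranspose_apply, hS_hi q j hq, apply_ite star, star_zero, mul_ite, mul_zero])]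
    rw [Finset.sum_ite_eq]
    simp [Complex.star_def]
  refine ⟨fun a b => (tOp (S * A * Sᴴ) - S * tOp A * Sᴴ)
    (Fin.castLE hkn.le a) (Fin.castLE hkn.le b), ?_⟩
  intro p q
  by_cases hp : (p : ℕ) < k
  · by_cases hq : (q : ℕ) < k
    · rw [dif_pos hp, dif_pos hq]
      have e1 : Fin.castLE hkn.le ⟨(p : ℕ), hp⟩ = p := Fin.ext rfl
      have e2 : Fin.castLE hkn.le ⟨(q : ℕ), hq⟩ = q := Fin.ext rfl
      simp only [e1, e2]
    · -- p low, q high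
      rw [dif_pos hp, dif_neg hq, Matrix.sub_apply, sub_eq_zero]
      have hpq : p < q := by rw [Fin.lt_def]; omega
      have L : (S * A * Sᴴ) q p = ∑ i, d q * A q i * (starRingEnd ℂ) (S p i) := by
        rw [mul_apply]
        refine Finset.sum_congr rfl fun i _ => ?_
        rw [row A q hq, conjTranspose_apply]
        rfl
      rw [show tOp (S * A * Sᴴ) p q = (starRingEnd ℂ) ((S * A * Sᴴ) q p) by
        simp only [tOp, Matrix.of_apply, if_neg hpq.asymm, if_pos hpq]]
      rw [L, map_sum, col (S * tOp A) q hq p, mul_apply, Finset.sum_mul]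
      refine Finset.sum_congr rfl fun i _ => ?_
      by_cases hi : (i : ℕ) < k
      · have ht : tOp A i q = (starRingEnd ℂ) (A q i) := by
          have hiq : i < q := by rw [Fin.lt_def]; omega
          simp only [tOp, Matrix.of_apply, if_neg hiq.asymm, if_pos hiq]
        rw [ht, _root_.map_mul, _root_.map_mul, Complex.conj_conj]
        ring
      · rw [hS_lo0 p i hp hi]
        simp
  · by_cases hq : (q : ℕ) < k
    · -- p high, q low
      rw [dif_neg hp, Matrix.sub_apply, sub_eq_zero]
      have hqp : q < p := by rw [Fin.lt_def]; omega
      rw [show tOp (S * A * Sᴴ) p q = (S * A * Sᴴ) p q by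
        simp only [tOp, Matrix.of_apply, if_pos hqp]]
      rw [mul_apply, mul_apply]
      refine Finset.sum_congr rfl fun j _ => ?_
      rw [row A p hp, row (tOp A) p hp]
      by_cases hj : (j : ℕ) < k
      · have hjp : j < p := by rw [Fin.lt_def]; omega
        rw [show tOp A p j = A p j by simp only [tOp, Matrix.of_apply, if_pos hjp]]
      · rw [conjTranspose_apply, hS_lo0 q j hq hj, star_zero, mul_zero, mul_zero]
    · -- both high
      rw [dif_neg hp, Matrix.sub_apply, sub_eq_zero]
      have e1 : (S * A * Sᴴ) p q = d p * A p q * (starRingEnd ℂ) (d q) := by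
        rw [col (S * A) q hq p, row A p hp]
      have e2 : (S * A * Sᴴ) q p = d q * A q p * (starRingEnd ℂ) (d p) := by
        rw [col (S * A) p hp q, row A q hq]
      have e3 : (S * tOp A * Sᴴ) p q = d p * tOp A p q * (starRingEnd ℂ) (d q) := by
        rw [col (S * tOp A) q hq p, row (tOp A) p hp]
      rw [e3]
      rcases lt_trichotomy p q with h | h | h
      · rw [show tOp (S * A * Sᴴ) p q = (starRingEnd ℂ) ((S * A * Sᴴ) q p) by
          simp only [tOp, Matrix.of_apply, if_neg h.asymm, if_pos h], e2,
          show tOp A p q = (starRingEnd ℂ) (A q p) by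
          simp only [tOp, Matrix.of_apply, if_neg h.asymm, if_pos h]]
        rw [_root_.map_mul, _root_.map_mul, Complex.conj_conj]
        ring
      · subst h
        simp [tOp]
      · rw [show tOp (S * A * Sᴴ) p q = (S * A * Sᴴ) p q by
          simp only [tOp, Matrix.of_apply, if_pos h], e1,
          show tOp A p q = A p q by simp only [tOp, Matrix.of_apply, if_pos h]]
end

section
/- Let n > k ≥ 1, let Z ∈ ℂ^{k×k} be arbitrary, let D ∈ ℂ^{(n−k)×(n−k)} be diagonal, and set S = D ⊕ Z (the block diagonal matrix with blocks D and Z). Then for every A ∈ ℂ^{n×n} there exists W' ∈ ℂ^{k×k} such that t(SAS^*) − S t(A) S^* = 0_{n−k} ⊕ W', where 0_{n−k} is the (n−k)×(n−k) zero matrix. In particular this holds when D is the identity I_{n−k}. -/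
open Matrix BigOperators

lemma tOp_lt {n : ℕ} (A : Matrix (Fin n) (Fin n) ℂ) {i j : Fin n} (h : j < i) :
    tOp A i j = A i j := by
  simp [tOp, h]

lemma tOp_gt {n : ℕ} (A : Matrix (Fin n) (Fin n) ℂ) {i j : Fin n} (h : i < j) :
    tOp A i j = (starRingEnd ℂ) (A j i) := by
  simp [tOp, h, not_lt.2 h.le]

lemma tOp_diag {n : ℕ} (A : Matrix (Fin n) (Fin n) ℂ) (i : Fin n) :
    tOp A i i = 0 := by
  simp [tOp]

/-- For `S = D ⊕ Z` with `D` diagonal of size `n-k` and `Z ∈ ℂ^{k×k}`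
arbitrary, the residual `t(SASᴴ) - S t(A) Sᴴ` is of the form `0_{n-k} ⊕ W'`. -/
theorem stmt_8 (n k : ℕ) (hk : 1 ≤ k) (hkn : k < n)
    (Z : Matrix (Fin k) (Fin k) ℂ) (d : Fin n → ℂ)
    (A : Matrix (Fin n) (Fin n) ℂ) :
    let S : Matrix (Fin n) (Fin n) ℂ := Matrix.of fun p q =>
      if hp : (p : ℕ) < n - k then (if p = q then d p else 0)
      else if hq : (q : ℕ) < n - k then 0
      else Z ⟨(p : ℕ) - (n - k), by have := p.2; omega⟩
             ⟨(q : ℕ) - (n - k), by have := q.2; omega⟩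
    ∃ W' : Matrix (Fin k) (Fin k) ℂ,
      ∀ p q : Fin n,
        (tOp (S * A * Sᴴ) - S * tOp A * Sᴴ) p q =
          if hp : (p : ℕ) < n - k then 0
          else if hq : (q : ℕ) < n - k then 0
          else W' ⟨(p : ℕ) - (n - k), by have := p.2; omega⟩
                  ⟨(q : ℕ) - (n - k), by have := q.2; omega⟩ := by
  intro S
  set m := n - k with hm
  set R : Matrix (Fin n) (Fin n) ℂ := tOp (S * A * Sᴴ) - S * tOp A * Sᴴ with hR
  have hSd : ∀ p q : Fin n, (p : ℕ) < m → S p q = if p = q then d p else 0 := by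
    intro p q hp
    show (if hp : (p : ℕ) < n - k then (if p = q then d p else 0) else _) = _
    rw [dif_pos hp]
  have hS0 : ∀ p q : Fin n, ¬ (p : ℕ) < m → (q : ℕ) < m → S p q = 0 := by
    intro p q hp hq
    show (if hp : (p : ℕ) < n - k then (if p = q then d p else 0) else _) = _
    rw [dif_neg hp, dif_pos hq]
  -- row / column actions of S on the diagonal block
  have rowS : ∀ (M : Matrix (Fin n) (Fin n) ℂ) (p q : Fin n), (p : ℕ) < m →
      (S * M) p q = d p * M p q := by
    intro M p q hp
    have h : ∀ j, S p j = if p = j then d p else 0 := fun j => hSd p j hp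
    simp [Matrix.mul_apply, h, ite_mul, Finset.sum_ite_eq]
  have colS : ∀ (M : Matrix (Fin n) (Fin n) ℂ) (p q : Fin n), (q : ℕ) < m →
      (M * Sᴴ) p q = M p q * (starRingEnd ℂ) (d q) := by
    intro M p q hq
    rw [Matrix.mul_apply, Finset.sum_eq_single q]
    · rw [Matrix.conjTranspose_apply, hSd q q hq, if_pos rfl]; rfl
    · intro j _ hj
      rw [Matrix.conjTranspose_apply, hSd q j hq, if_neg (Ne.symm hj), star_zero, mul_zero]
    · intro h; exact absurd (Finset.mem_univ q) h
  have hRzero : ∀ p q : Fin n, ((p : ℕ) < m ∨ (q : ℕ) < m) → R p q = 0 := by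
    intro p q hpq
    have key : tOp (S * A * Sᴴ) p q = (S * tOp A * Sᴴ) p q := by
      rcases Nat.lt_or_ge (p : ℕ) m with hp | hp
      · rcases Nat.lt_or_ge (q : ℕ) m with hq | hq
        · -- both in the diagonal block
          have e1 : (S * A * Sᴴ) p q = d p * A p q * (starRingEnd ℂ) (d q) := by
            rw [colS (S * A) p q hq, rowS A p q hp]
          have e2 : (S * A * Sᴴ) q p = d q * A q p * (starRingEnd ℂ) (d p) := by
            rw [colS (S * A) q p hp, rowS A q p hq]
          have e3 : (S * tOp A * Sᴴ) p q = d p * tOp A p q * (starRingEnd ℂ) (d q) := by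
            rw [colS (S * tOp A) p q hq, rowS (tOp A) p q hp]
          rw [e3]
          rcases lt_trichotomy q p with h | h | h
          · rw [tOp_lt _ h, tOp_lt _ h, e1]
          · subst h
            rw [tOp_diag, tOp_diag]
            ring
          · rw [tOp_gt _ h, tOp_gt _ h, e2]
            simp only [_root_.map_mul, Complex.conj_conj]
            ring
        · -- p in diagonal block, q in Z block : p < q
          have hpq' : p < q := by rw [Fin.lt_def]; omega
          have e1 : (S * A * Sᴴ) q p = (S * A) q p * (starRingEnd ℂ) (d p) :=
            colS (S * A) q p hp
          have e3 : (S * tOp A * Sᴴ) p q = d p * (tOp A * Sᴴ) p q := by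
            rw [mul_assoc]; exact rowS (tOp A * Sᴴ) p q hp
          rw [e3, tOp_gt _ hpq', e1, _root_.map_mul, Complex.conj_conj,
            Matrix.mul_apply, Matrix.mul_apply, map_sum, Finset.sum_mul, Finset.mul_sum]
          apply Finset.sum_congr rfl
          intro j _
          rcases Nat.lt_or_ge (j : ℕ) m with hj | hj
          · rw [Matrix.conjTranspose_apply, hS0 q j (by omega) hj]
            simp
          · have hpj : p < j := by rw [Fin.lt_def]; omega
            rw [tOp_gt _ hpj, Matrix.conjTranspose_apply, _root_.map_mul]
            simp only [Complex.star_def]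
            ring
      · -- p in Z block, so q < m, q < p
        have hq : (q : ℕ) < m := hpq.resolve_left (by omega)
        have hqp' : q < p := by rw [Fin.lt_def]; omega
        have e1 : (S * A * Sᴴ) p q = (S * A) p q * (starRingEnd ℂ) (d q) :=
          colS (S * A) p q hq
        have e3 : (S * tOp A * Sᴴ) p q = (S * tOp A) p q * (starRingEnd ℂ) (d q) :=
          colS (S * tOp A) p q hq
        rw [e3, tOp_lt _ hqp', e1, Matrix.mul_apply, Matrix.mul_apply]
        congr 1
        apply Finset.sum_congr rfl
        intro j _
        rcases Nat.lt_or_ge (j : ℕ) m with hj | hj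
        · rw [hS0 p j (by omega) hj]; simp
        · have hqj : q < j := by rw [Fin.lt_def]; omega
          rw [tOp_lt _ hqj]
    simp [hR, Matrix.sub_apply, key]
  refine ⟨Matrix.of fun a b =>
      R ⟨m + (a : ℕ), by have := a.2; omega⟩ ⟨m + (b : ℕ), by have := b.2; omega⟩, ?_⟩
  intro p q
  rcases Nat.lt_or_ge (p : ℕ) m with hp | hp
  · rw [dif_pos hp]; exact hRzero p q (Or.inl hp)
  rw [dif_neg (not_lt.2 hp)]
  rcases Nat.lt_or_ge (q : ℕ) m with hq | hq
  · rw [dif_pos hq]; exact hRzero p q (Or.inr hq)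
  rw [dif_neg (not_lt.2 hq)]
  show R p q = R _ _
  congr 1 <;> apply Fin.ext <;> simp <;> omega
end

section
/- Let A ∈ ℂ^{n×n}, let 1 ≤ h < k ≤ n−1, let G_h, …, G_k be Givens rotations (G_i acting on rows i and i+1 with s_i ≠ 0 for i = h,…,k), set Q = G_h G_{h+1} ⋯ G_k, and let D ∈ ℝ^{n×n} be any real diagonal matrix. Then there exist vectors a, b ∈ ℂ^n and d ∈ ℝ^n such that R = t(QAQ^*) − Q (D + t(A)) Q^* satisfies R = diag(d) + t(ab^*); in particular R is Hermitian and 1-quasiseparable. -/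
open Matrix BigOperators Finset

/-- `G` is the Givens rotation acting on (0-indexed) rows `i` and `i+1` with
parameters `c ∈ ℝ`, `s ∈ ℂ`, `c² + |s|² = 1`. -/
def IsGivensAt {n : ℕ} (i : ℕ) (c : ℝ) (s : ℂ) (G : Matrix (Fin n) (Fin n) ℂ) : Prop :=
  i + 1 < n ∧ c ^ 2 + ‖s‖ ^ 2 = 1 ∧
  ∀ p q : Fin n,
    G p q =
      if (p : ℕ) = i ∧ (q : ℕ) = i then (c : ℂ)
      else if (p : ℕ) = i ∧ (q : ℕ) = i + 1 then s
      else if (p : ℕ) = i + 1 ∧ (q : ℕ) = i then -((starRingEnd ℂ) s)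
      else if (p : ℕ) = i + 1 ∧ (q : ℕ) = i + 1 then (c : ℂ)
      else if p = q then 1 else 0

/-- The ordered product `G a * G (a+1) * ⋯ * G b`. -/
noncomputable def rotProd {n : ℕ} (G : ℕ → Matrix (Fin n) (Fin n) ℂ) (a b : ℕ) :
    Matrix (Fin n) (Fin n) ℂ :=
  ((List.range (b + 1 - a)).map (fun j => G (a + j))).prod

set_option maxHeartbeats 2000000

noncomputable def qEnt (h k : ℕ) (c : ℕ → ℝ) (s : ℕ → ℂ) (p q : ℕ) : ℂ :=
  if h ≤ p ∧ p ≤ k+1 ∧ h ≤ q ∧ q ≤ k+1 then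
    if q + 1 < p then 0
    else if p = q + 1 then -((starRingEnd ℂ) (s q))
    else (if p = h then 1 else (c (p-1) : ℂ)) * (if q = k+1 then 1 else (c q : ℂ)) *
      ∏ l ∈ Finset.Ico p q, s l
  else if p = q then 1 else 0

lemma rotProd_self {n : ℕ} (G : ℕ → Matrix (Fin n) (Fin n) ℂ) (a : ℕ) :
    rotProd G a a = G a := by
  unfold rotProd
  have : a + 1 - a = 1 := by omega
  rw [this]
  show (List.map (fun j => G (a + j)) (List.range 1)).prod = G a
  rw [List.range_succ]
  simp

lemma rotProd_succ {n : ℕ} (G : ℕ → Matrix (Fin n) (Fin n) ℂ) (a b : ℕ) (hab : a ≤ b + 1) :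
    rotProd G a (b+1) = rotProd G a b * G (b+1) := by
  unfold rotProd
  have h1 : b + 1 + 1 - a = (b + 1 - a) + 1 := by omega
  rw [h1, List.range_succ, List.map_append, List.prod_append]
  have h2 : a + (b + 1 - a) = b + 1 := by omega
  simp [h2]

lemma givens_eq_qEnt {n h : ℕ} {c : ℕ → ℝ} {s : ℕ → ℂ} {G : Matrix (Fin n) (Fin n) ℂ}
    (hg : IsGivensAt h (c h) (s h) G) (p q : Fin n) :
    G p q = qEnt h h c s (p : ℕ) (q : ℕ) := by
  rw [hg.2.2 p q]
  have e1 : Finset.Ico h h = ∅ := Finset.Ico_self h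
  have e2 : Finset.Ico h (h+1) = {h} := by rw [Finset.Ico_add_one_right_eq_Icc, Finset.Icc_self]
  have e3 : Finset.Ico (h+1) (h+1) = ∅ := Finset.Ico_self _
  simp only [qEnt, Fin.ext_iff]
  split_ifs <;> first
    | rfl
    | omega
    | (simp_all [e1, e2, e3] <;> try omega)

lemma rotProd_apply {n : ℕ} (c : ℕ → ℝ) (s : ℕ → ℂ) (G : ℕ → Matrix (Fin n) (Fin n) ℂ) (h : ℕ) :
    ∀ k, h ≤ k → k + 1 < n → (∀ i, h ≤ i → i ≤ k → IsGivensAt i (c i) (s i) (G i)) →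
    ∀ p q : Fin n, rotProd G h k p q = qEnt h k c s (p : ℕ) (q : ℕ) := by
  intro k hk
  induction k, hk using Nat.le_induction with
  | base =>
    intro _ hG p q
    rw [rotProd_self]
    exact givens_eq_qEnt (hG h le_rfl le_rfl) p q
  | succ k hk IH =>
    intro hkn hG p q
    have IH' := IH (by omega) (fun i hi hik => hG i hi (by omega))
    rw [rotProd_succ G h k (by omega), Matrix.mul_apply]
    have gk := (hG (k+1) (by omega) le_rfl).2.2
    have hsum : ∀ (X Y : ℂ), (∀ r : Fin n, G (k+1) r q =
        (if (r : ℕ) = k+1 then X else 0) + (if (r : ℕ) = k+2 then Y else 0)) →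
        ∑ r, rotProd G h k p r * G (k+1) r q
          = rotProd G h k p ⟨k+1, by omega⟩ * X + rotProd G h k p ⟨k+2, by omega⟩ * Y := by
      intro X Y hcol
      have e1 : ∀ r : Fin n, ((r : ℕ) = k+1) ↔ (r = ⟨k+1, by omega⟩) := by
        intro r; rw [Fin.ext_iff]
      have e2 : ∀ r : Fin n, ((r : ℕ) = k+2) ↔ (r = ⟨k+2, by omega⟩) := by
        intro r; rw [Fin.ext_iff]
      simp only [hcol, e1, e2, mul_add, Finset.sum_add_distrib, mul_ite, mul_zero,
        Finset.sum_ite_eq', Finset.mem_univ, if_pos]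
    by_cases hq1 : (q : ℕ) = k + 1
    · have hcol : ∀ r : Fin n, G (k+1) r q =
          (if (r : ℕ) = k+1 then ((c (k+1) : ℂ)) else 0) +
          (if (r : ℕ) = k+2 then (-((starRingEnd ℂ) (s (k+1)))) else 0) := by
        intro r
        rw [gk r q]
        simp only [Fin.ext_iff]
        split_ifs <;> first | omega | simp
      rw [hsum _ _ hcol, IH' p ⟨k+1, by omega⟩, IH' p ⟨k+2, by omega⟩]
      show qEnt h k c s (p : ℕ) (k+1) * _ + qEnt h k c s (p : ℕ) (k+2) * _ = _
      rw [hq1]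
      simp only [qEnt]
      split_ifs <;> first
        | rfl
        | omega
        | ring1
    · by_cases hq2 : (q : ℕ) = k + 2
      · have hcol : ∀ r : Fin n, G (k+1) r q =
            (if (r : ℕ) = k+1 then (s (k+1)) else 0) +
            (if (r : ℕ) = k+2 then ((c (k+1) : ℂ)) else 0) := by
          intro r
          rw [gk r q]
          simp only [Fin.ext_iff]
          split_ifs <;> first | omega | simp
        rw [hsum _ _ hcol, IH' p ⟨k+1, by omega⟩, IH' p ⟨k+2, by omega⟩]
        show qEnt h k c s (p : ℕ) (k+1) * _ + qEnt h k c s (p : ℕ) (k+2) * _ = _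
        rw [hq2]
        simp only [qEnt]
        simp only [show k+1+1 = k+2 from rfl]
        have hpr : ∀ pp : ℕ, pp ≤ k + 1 →
            (∏ l ∈ Finset.Ico pp (k+2), s l) = (∏ l ∈ Finset.Ico pp (k+1), s l) * s (k+1) := by
          intro pp hpp
          exact (Finset.prod_Ico_succ_top hpp s)
        split_ifs <;> first
          | rfl
          | omega
          | ring1
          | (rw [hpr _ (by omega)]; ring1)
          | (rw [show ((p : ℕ)) = k+2 by omega, Finset.Ico_self, Finset.prod_empty, show k+2-1 = k+1 from rfl]; ring1)
      · have hcol : ∀ r : Fin n, G (k+1) r q = (if r = q then (1:ℂ) else 0) := by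
          intro r
          rw [gk r q]
          simp only [Fin.ext_iff]
          split_ifs <;> first | omega | simp
        simp only [hcol, mul_ite, mul_one, mul_zero, Finset.sum_ite_eq',
          Finset.mem_univ, if_pos]
        rw [IH' p q]
        simp only [qEnt]
        split_ifs <;> first
          | rfl
          | omega

lemma tOp_isHermitian {n : ℕ} (X : Matrix (Fin n) (Fin n) ℂ) : (tOp X).IsHermitian := by
  show (tOp X)ᴴ = tOp X
  ext i j
  rcases lt_trichotomy i j with hij | hij | hij
  · simp only [tOp, Matrix.conjTranspose_apply, Matrix.of_apply]
    rw [if_pos hij, if_neg (not_lt_of_gt hij), if_pos hij]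
    rfl
  · subst hij
    simp only [tOp, Matrix.conjTranspose_apply, Matrix.of_apply]
    rw [if_neg (lt_irrefl _), if_neg (lt_irrefl _)]
    simp
  · simp only [tOp, Matrix.conjTranspose_apply, Matrix.of_apply]
    rw [if_neg (not_lt_of_gt hij), if_pos hij, if_pos hij]
    exact Complex.conj_conj _

lemma rank_le_one_of_repr {m l : Type*} [Fintype m] [Fintype l] [DecidableEq m] [DecidableEq l]
    (M : Matrix m l ℂ) (x : m → ℂ) (y : l → ℂ) (hxy : ∀ i j, M i j = x i * y j) :
    M.rank ≤ 1 := by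
  have hM : M = Matrix.vecMulVec x y := by
    ext i j; exact hxy i j
  rw [hM, Matrix.vecMulVec_eq Unit]
  calc (Matrix.replicateCol Unit x * Matrix.replicateRow Unit y).rank
      ≤ (Matrix.replicateCol Unit x).rank := Matrix.rank_mul_le_left _ _
    _ ≤ Fintype.card Unit := Matrix.rank_le_card_width _
    _ = 1 := rfl

/-- Corollary 2.6 of the paper (0-indexed rotations on rows `h, …, k`):
for any real diagonal `D`, the residual
`R = t(QAQᴴ) - Q (D + t(A)) Qᴴ` has the form `diag d + t(abᴴ)`;
in particular it is Hermitian and 1-quasiseparable. -/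
theorem stmt_11 (n h k : ℕ) (hhk : h < k) (hk : k + 1 < n)
    (c : ℕ → ℝ) (s : ℕ → ℂ) (G : ℕ → Matrix (Fin n) (Fin n) ℂ)
    (hG : ∀ i, h ≤ i → i ≤ k → IsGivensAt i (c i) (s i) (G i))
    (hs : ∀ i, h ≤ i → i ≤ k → s i ≠ 0)
    (A : Matrix (Fin n) (Fin n) ℂ) (dD : Fin n → ℝ) :
    let Q := rotProd G h k
    let R := tOp (Q * A * Qᴴ) -
      Q * (Matrix.diagonal (fun i => (dD i : ℂ)) + tOp A) * Qᴴ
    ∃ (a b : Fin n → ℂ) (d : Fin n → ℝ),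
      R = Matrix.diagonal (fun i => (d i : ℂ)) +
          tOp (Matrix.vecMulVec a (fun j => (starRingEnd ℂ) (b j))) ∧
      R.IsHermitian ∧ lowQS 1 R ∧ upQS 1 R := by
  intro Q R
  have hQdef : Q = rotProd G h k := rfl
  have hRdef : R = tOp (Q * A * Qᴴ) -
      Q * (Matrix.diagonal (fun i => (dD i : ℂ)) + tOp A) * Qᴴ := rfl
  have hQ : ∀ p q : Fin n, Q p q = qEnt h k c s (p : ℕ) (q : ℕ) := by
    rw [hQdef]; exact rotProd_apply c s G h k hhk.le hk hG
  -- tails of products of s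
  set P : ℕ → ℂ := fun j => ∏ l ∈ Finset.Ico j (k+1), s l with hPdef
  have hPne : ∀ j, h ≤ j → P j ≠ 0 := by
    intro j hj
    apply Finset.prod_ne_zero_iff.mpr
    intro l hl
    rw [Finset.mem_Ico] at hl
    exact hs l (by omega) (by omega)
  -- generators of the upper part of Q
  set u : ℕ → ℂ := fun j =>
    if h ≤ j ∧ j ≤ k+1 then (if j = h then 1 else (c (j-1) : ℂ)) * P j else 0 with hu
  set v : ℕ → ℂ := fun j =>
    if h ≤ j ∧ j ≤ k+1 then (if j = k+1 then 1 else (c j : ℂ)) * (P j)⁻¹ else 0 with hv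
  have F1 : ∀ p q : Fin n, (q : ℕ) + 1 < (p : ℕ) → Q p q = 0 := by
    intro p q hpq
    rw [hQ]
    simp only [qEnt]
    split_ifs <;> first | rfl | omega
  have F2 : ∀ i j : Fin n, ¬(h ≤ (j : ℕ) ∧ (j : ℕ) ≤ k+1) → (i : ℕ) = (j : ℕ) + 1 →
      Q i j = 0 := by
    intro i j hj hij
    rw [hQ]
    simp only [qEnt]
    split_ifs <;> first | rfl | omega
  have F3 : ∀ j q : Fin n, (j : ℕ) ≤ (q : ℕ) → Q j q
      = u (j : ℕ) * v (q : ℕ) +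
        (if h ≤ (j : ℕ) ∧ (j : ℕ) ≤ k+1 then 0 else if (j : ℕ) = (q : ℕ) then 1 else 0) := by
    intro j q hjq
    rw [hQ]
    simp only [qEnt, hu, hv]
    by_cases hw1 : h ≤ (j : ℕ) ∧ (j : ℕ) ≤ k+1
    · by_cases hw2 : (q : ℕ) ≤ k+1
      · have hq : h ≤ (q : ℕ) := le_trans hw1.1 hjq
        have hne := hPne (q : ℕ) hq
        have hsplit : P (j : ℕ) = (∏ l ∈ Finset.Ico (j : ℕ) (q : ℕ), s l) * P (q : ℕ) :=
          (Finset.prod_Ico_consecutive s hjq (by omega)).symm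
        split_ifs <;> first
          | omega
          | (rw [hsplit]; field_simp; try ring1)
      · split_ifs <;> first | omega | simp
    · split_ifs <;> first | omega | simp
  -- the strictly upper-triangular correction matrix
  set W : Matrix (Fin n) (Fin n) ℂ :=
    A - (Matrix.diagonal (fun i => (dD i : ℂ)) + tOp A) with hWdef
  have hWlow : ∀ p q : Fin n, (q : ℕ) < (p : ℕ) → W p q = 0 := by
    intro p q hpq
    have hne : p ≠ q := by
      intro e; rw [e] at hpq; omega
    have h1 : q < p := Fin.lt_def.mpr hpq
    rw [hWdef]
    simp only [Matrix.sub_apply, Matrix.add_apply, Matrix.diagonal_apply_ne _ hne,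
      tOp, Matrix.of_apply, if_pos h1]
    ring
  have hBherm : (Matrix.diagonal (fun i => (dD i : ℂ)) + tOp A).IsHermitian := by
    refine Matrix.IsHermitian.add ?_ (tOp_isHermitian A)
    show _ᴴ = _
    ext i j
    by_cases e : i = j
    · subst e; simp [Matrix.conjTranspose_apply, Complex.conj_ofReal]
    · simp [Matrix.conjTranspose_apply, Matrix.diagonal_apply_ne _ e,
        Matrix.diagonal_apply_ne _ (Ne.symm e)]
  have hRherm : R.IsHermitian := by
    rw [hRdef]
    exact Matrix.IsHermitian.sub (tOp_isHermitian _)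
      (Matrix.isHermitian_mul_mul_conjTranspose Q hBherm)
  have hRlow : ∀ i j : Fin n, (j : ℕ) < (i : ℕ) →
      R i j = ∑ p : Fin n, ∑ q : Fin n, Q i p * W p q * star (Q j q) := by
    intro i j hij
    have h2 : Q * W * Qᴴ = Q * A * Qᴴ -
        Q * (Matrix.diagonal (fun i => (dD i : ℂ)) + tOp A) * Qᴴ := by
      rw [hWdef, Matrix.mul_sub, Matrix.sub_mul]
    have h1 : R i j = (Q * W * Qᴴ) i j := by
      rw [hRdef, h2]
      simp only [Matrix.sub_apply]
      congr 1
      simp only [tOp, Matrix.of_apply]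
      rw [if_pos (Fin.lt_def.mpr hij)]
    rw [h1]
    simp only [Matrix.mul_apply, Matrix.conjTranspose_apply, Finset.sum_mul]
    rw [Finset.sum_comm]
  set a : Fin n → ℂ :=
    fun i => ∑ p : Fin n, ∑ q : Fin n, Q i p * W p q * star (v (q : ℕ)) with ha
  set b : Fin n → ℂ := fun j => u (j : ℕ) with hb
  have key : ∀ i j : Fin n, (j : ℕ) < (i : ℕ) → R i j = a i * star (b j) := by
    intro i j hij
    rw [hRlow i j hij, ha, hb]
    simp only []
    rw [Finset.sum_mul]
    refine Finset.sum_congr rfl (fun p _ => ?_)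
    rw [Finset.sum_mul]
    refine Finset.sum_congr rfl (fun q _ => ?_)
    by_cases hQ0 : Q i p = 0
    · rw [hQ0]; ring
    by_cases hW0 : W p q = 0
    · rw [hW0]; ring
    have hip : (i : ℕ) ≤ (p : ℕ) + 1 := by
      by_contra hc; exact hQ0 (F1 i p (by omega))
    have hpq : (p : ℕ) ≤ (q : ℕ) := by
      by_contra hc; exact hW0 (hWlow p q (by omega))
    have hjq : (j : ℕ) ≤ (q : ℕ) := by omega
    rw [F3 j q hjq]
    by_cases hwin : h ≤ (j : ℕ) ∧ (j : ℕ) ≤ k+1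
    · rw [if_pos hwin, add_zero, star_mul']
      ring
    · rw [if_neg hwin]
      by_cases hjq2 : (j : ℕ) = (q : ℕ)
      · exfalso
        have hpj : p = j := Fin.ext (by omega)
        exact hQ0 (by rw [hpj]; exact F2 i j hwin (by omega))
      · rw [if_neg hjq2, add_zero, star_mul']
        ring
  set d : Fin n → ℝ := fun i => (R i i).re with hd
  have hdiag : ∀ i : Fin n, ((d i : ℝ) : ℂ) = R i i := by
    intro i
    have h1 : star (R i i) = R i i := hRherm.apply i i
    exact Complex.conj_eq_iff_re.mp h1
  refine ⟨a, b, d, ?_, hRherm, ?_, ?_⟩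
  · -- the structural identity
    ext i j
    rcases lt_trichotomy ((j : ℕ)) ((i : ℕ)) with hij | hij | hij
    · have hne : i ≠ j := by
        intro e; rw [e] at hij; omega
      have hlt : j < i := Fin.lt_def.mpr hij
      rw [key i j hij]
      simp only [Matrix.add_apply, Matrix.diagonal_apply_ne _ hne, tOp, Matrix.of_apply,
        Matrix.vecMulVec_apply, if_pos hlt, zero_add]
      rw [starRingEnd_apply]
    · have e : i = j := Fin.ext hij.symm
      subst e
      simp only [Matrix.add_apply, Matrix.diagonal_apply_eq, tOp, Matrix.of_apply,
        if_neg (lt_irrefl i), add_zero]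
      exact (hdiag i).symm
    · have hne : i ≠ j := by
        intro e; rw [e] at hij; omega
      have hlt : i < j := Fin.lt_def.mpr hij
      have h1 : R i j = star (R j i) := (hRherm.apply i j).symm
      rw [h1, key j i hij]
      simp only [Matrix.add_apply, Matrix.diagonal_apply_ne _ hne, tOp, Matrix.of_apply,
        if_neg (not_lt_of_gt hlt), if_pos hlt, Matrix.vecMulVec_apply, zero_add]
      rw [starRingEnd_apply, starRingEnd_apply]
  · -- lowQS
    intro i hi hin
    exact rank_le_one_of_repr _
      (fun p : Fin (n - i) => a ⟨i + p.1, by have := p.2; omega⟩)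
      (fun q : Fin i => star (b ⟨q.1, by have := q.2; omega⟩))
      (fun p q => key ⟨i + p.1, by have := p.2; omega⟩ ⟨q.1, by have := q.2; omega⟩
        (by show q.1 < i + p.1; have := q.2; omega))
  · -- upQS
    intro i hi hin
    refine rank_le_one_of_repr _
      (fun p : Fin i => b ⟨p.1, by have := p.2; omega⟩)
      (fun q : Fin (n - i) => star (a ⟨i + q.1, by have := q.2; omega⟩))
      (fun p q => ?_)
    have h1 : R ⟨p.1, by have := p.2; omega⟩ ⟨i + q.1, by have := q.2; omega⟩
        = star (R ⟨i + q.1, by have := q.2; omega⟩ ⟨p.1, by have := p.2; omega⟩) :=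
      (hRherm.apply _ _).symm
    show R _ _ = _
    rw [h1, key ⟨i + q.1, by have := q.2; omega⟩ ⟨p.1, by have := p.2; omega⟩
      (by show p.1 < i + q.1; have := p.2; omega)]
    rw [star_mul', star_star]
    ring
end

section
/- Let A = D + UV^* ∈ ℂ^{n×n} with D a real diagonal matrix and U, V ∈ ℂ^{n×k}, and assume the first column of A is not already in Hessenberg form, i.e., A_{i1} ≠ 0 for some i ≥ 3. Let G_2, …, G_{n−1} be Givens rotations (G_i acting on rows i and i+1) such that Q_1 = G_2 G_3 ⋯ G_{n−1} satisfies Q_1 A e_1 = α e_1 + β e_2 for some α, β ∈ ℂ. Then the matrix obtained by removing the first two rows of Q_1 U has rank at most k−1: rank((Q_1 U)[3:n, :]) ≤ k−1. -/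
open Matrix BigOperators

lemma rank_le_of_mulVec_eq_zero' {m k : ℕ} (M : Matrix (Fin m) (Fin k) ℂ)
    (w : Fin k → ℂ) (hw : w ≠ 0) (h : M.mulVec w = 0) : M.rank ≤ k - 1 := by
  have h1 := LinearMap.finrank_range_add_finrank_ker M.mulVecLin
  rw [Module.finrank_fintype_fun_eq_card, Fintype.card_fin] at h1
  have hmem : w ∈ LinearMap.ker M.mulVecLin := by
    rw [LinearMap.mem_ker, Matrix.mulVecLin_apply, h]
  have h2 : 0 < Module.finrank ℂ (LinearMap.ker M.mulVecLin) := by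
    rw [Module.finrank_pos_iff]
    exact nontrivial_of_ne ⟨w, hmem⟩ 0 (by simpa [Subtype.ext_iff] using hw)
  have : M.rank = Module.finrank ℂ (LinearMap.range M.mulVecLin) := rfl
  omega

lemma prod_col0 {n : ℕ} (hn : 0 < n) (L : List (Matrix (Fin n) (Fin n) ℂ))
    (hL : ∀ M ∈ L, ∀ p : Fin n, M p ⟨0, hn⟩ = if p = ⟨0, hn⟩ then 1 else 0) :
    ∀ p : Fin n, L.prod p ⟨0, hn⟩ = if p = ⟨0, hn⟩ then 1 else 0 := by
  induction L with
  | nil => intro p; simp [Matrix.one_apply]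
  | cons M L ih =>
    intro p
    have hM := hL M (by simp)
    have ihL := ih (fun N hN => hL N (by simp [hN]))
    rw [List.prod_cons, Matrix.mul_apply]
    calc ∑ q, M p q * L.prod q ⟨0, hn⟩
        = ∑ q, (if q = ⟨0, hn⟩ then M p q else 0) := by
          refine Finset.sum_congr rfl fun q _ => ?_
          rw [ihL q]; split_ifs <;> simp
      _ = M p ⟨0, hn⟩ := by rw [Finset.sum_ite_eq' Finset.univ]; simp
      _ = _ := hM p

/-- First part of Theorem 3.3 of the paper (0-indexed: the paper's rotations
`G_2, …, G_{n-1}` are `G 1, …, G (n-2)`, its condition `A[3:n,1] ≠ 0` reads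
`A i 0 ≠ 0` for some `i ≥ 2`, and "removing the first two rows of `Q₁U`"
keeps the rows of index `≥ 2`): the matrix obtained by removing the first
two rows of `Q₁ U` has rank at most `k - 1`. -/
theorem stmt_16 (n k : ℕ) (hn : 3 ≤ n)
    (dd : Fin n → ℝ) (U V : Matrix (Fin n) (Fin k) ℂ)
    (A : Matrix (Fin n) (Fin n) ℂ)
    (hA : A = Matrix.diagonal (fun i => (dd i : ℂ)) + U * Vᴴ)
    (hcol : ∃ i : Fin n, 2 ≤ (i : ℕ) ∧ A i ⟨0, by omega⟩ ≠ 0)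
    (c : ℕ → ℝ) (s : ℕ → ℂ) (G : ℕ → Matrix (Fin n) (Fin n) ℂ)
    (hG : ∀ i, 1 ≤ i → i ≤ n - 2 → IsGivensAt i (c i) (s i) (G i))
    (Q₁ : Matrix (Fin n) (Fin n) ℂ)
    (hQ₁ : Q₁ = ((List.range (n - 2)).map (fun j => G (1 + j))).prod)
    (α β : ℂ)
    (hQA : ∀ p : Fin n, (Q₁ * A) p ⟨0, by omega⟩ =
      if (p : ℕ) = 0 then α else if (p : ℕ) = 1 then β else 0) :
    (Matrix.of fun (p : Fin (n - 2)) (j : Fin k) =>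
      (Q₁ * U) ⟨(p : ℕ) + 2, by have := p.2; omega⟩ j).rank ≤ k - 1 := by
  have hn0 : 0 < n := by omega
  set e0 : Fin n := ⟨0, hn0⟩ with he0
  set w : Fin k → ℂ := fun j => (starRingEnd ℂ) (V e0 j) with hw
  -- column 0 of A
  have hAcol : ∀ q : Fin n, A q e0 =
      (if q = e0 then (dd q : ℂ) else 0) + ∑ j, U q j * w j := by
    intro q
    rw [hA]
    simp [Matrix.add_apply, Matrix.diagonal_apply, Matrix.mul_apply,
      Matrix.conjTranspose_apply, hw]
  -- column 0 of Q₁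
  have hQcol : ∀ p : Fin n, Q₁ p e0 = if p = e0 then 1 else 0 := by
    rw [hQ₁]
    apply prod_col0 hn0
    intro M hM p
    simp only [List.mem_map, List.mem_range] at hM
    obtain ⟨j, hj, rfl⟩ := hM
    obtain ⟨hlt, -, hent⟩ := hG (1 + j) (by omega) (by omega)
    rw [hent p e0]
    have h0 : (e0 : ℕ) = 0 := rfl
    rw [h0, if_neg (by rintro ⟨-, h⟩; omega), if_neg (by rintro ⟨-, h⟩; omega),
      if_neg (by rintro ⟨-, h⟩; omega), if_neg (by rintro ⟨-, h⟩; omega)]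
  -- the key vanishing identity
  have main : ∀ P : Fin n, 2 ≤ (P : ℕ) → ∑ j, (Q₁ * U) P j * w j = 0 := by
    intro P hP
    have h1 : (Q₁ * A) P e0 = 0 := by
      rw [hQA P, if_neg (by omega), if_neg (by omega)]
    have h2 : (Q₁ * A) P e0 = Q₁ P e0 * (dd e0 : ℂ) + ∑ j, (Q₁ * U) P j * w j := by
      rw [Matrix.mul_apply]
      calc ∑ q, Q₁ P q * A q e0
          = ∑ q, (Q₁ P q * (if q = e0 then (dd q : ℂ) else 0)
              + ∑ j, Q₁ P q * (U q j * w j)) := by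
            refine Finset.sum_congr rfl fun q _ => ?_
            rw [hAcol q, mul_add, Finset.mul_sum]
        _ = ∑ q, (if q = e0 then Q₁ P q * (dd q : ℂ) else 0)
              + ∑ q, ∑ j, Q₁ P q * (U q j * w j) := by
            rw [Finset.sum_add_distrib]
            congr 1
            exact Finset.sum_congr rfl fun q _ => by split_ifs <;> simp
        _ = Q₁ P e0 * (dd e0 : ℂ) + ∑ j, (Q₁ * U) P j * w j := by
            congr 1
            · rw [Finset.sum_ite_eq' Finset.univ]; simp
            · rw [Finset.sum_comm]
              refine Finset.sum_congr rfl fun j _ => ?_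
              rw [Matrix.mul_apply, Finset.sum_mul]
              exact Finset.sum_congr rfl fun q _ => (mul_assoc _ _ _).symm
    rw [h1, hQcol P, if_neg (by intro h; rw [h] at hP; simp [he0] at hP)] at h2
    rw [zero_mul, zero_add] at h2
    exact h2.symm
  -- w ≠ 0
  obtain ⟨i₀, hi₀2, hi₀A⟩ := hcol
  have hwne : w ≠ 0 := by
    intro h
    apply hi₀A
    show A i₀ e0 = 0
    rw [hAcol i₀, if_neg (by intro h'; rw [h'] at hi₀2; simp [he0] at hi₀2)]
    simp [h]
  exact rank_le_of_mulVec_eq_zero' _ w hwne (funext fun p => by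
    simpa [Matrix.mulVec, dotProduct] using
      main ⟨(p : ℕ) + 2, by have := p.2; omega⟩ (by simp))
end

section
/- (Hyman's method) Let H ∈ ℂ^{n×n} be upper Hessenberg, let x ∈ ℂ, and suppose v ∈ ℂ^n satisfies (xI − H)v = α e_1 for some α ∈ ℂ and v_n = 1. Then det(xI − H) = α ∏_{i=2}^{n} h_{i,i−1}, where h_{i,i−1} are the subdiagonal entries of H. -/
open Matrix BigOperators

/-- Hyman's method: if `H` is upper Hessenberg, `(xI - H) v = α e₁` and
`v_n = 1`, then `det (xI - H) = α ∏_{i=2}^{n} h_{i,i-1}` (0-indexed: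
`∏_{i=0}^{n-2} H (i+1) i`). -/
theorem stmt_19 (n : ℕ) (hn : 1 ≤ n)
    (H : Matrix (Fin n) (Fin n) ℂ)
    (hHess : ∀ i j : Fin n, (j : ℕ) + 1 < (i : ℕ) → H i j = 0)
    (x : ℂ) (v : Fin n → ℂ) (α : ℂ)
    (hv : (x • (1 : Matrix (Fin n) (Fin n) ℂ) - H).mulVec v =
      fun j : Fin n => if (j : ℕ) = 0 then α else 0)
    (hvn : v ⟨n - 1, by omega⟩ = 1) :
    (x • (1 : Matrix (Fin n) (Fin n) ℂ) - H).det =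
      α * ∏ i : Fin (n - 1),
        H ⟨(i : ℕ) + 1, by have := i.2; omega⟩ ⟨(i : ℕ), by have := i.2; omega⟩ := by
  obtain ⟨m, rfl⟩ : ∃ m, n = m + 1 := ⟨n - 1, by omega⟩
  set A : Matrix (Fin (m + 1)) (Fin (m + 1)) ℂ :=
    x • (1 : Matrix (Fin (m + 1)) (Fin (m + 1)) ℂ) - H with hA
  set b : Fin (m + 1) → ℂ := fun j => if (j : ℕ) = 0 then α else 0 with hb
  -- off-diagonal entries of A equal -H
  have hAoff : ∀ i j : Fin (m + 1), i ≠ j → A i j = -H i j := by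
    intro i j hij
    simp [hA, Matrix.one_apply_ne hij, Matrix.sub_apply, Matrix.smul_apply]
  -- last index
  have hlast : (⟨m + 1 - 1, by omega⟩ : Fin (m + 1)) = Fin.last m := rfl
  rw [hlast] at hvn
  -- Step 1: Cramer's rule
  have hcr : A.det * v (Fin.last m) = (A.updateCol (Fin.last m) b).det := by
    have h1 : A.cramer b = A.det • v := by
      rw [← hv, Matrix.cramer_eq_adjugate_mulVec, Matrix.mulVec_mulVec,
        Matrix.adjugate_mul, Matrix.smul_mulVec, Matrix.one_mulVec]
    have h2 := congrFun h1 (Fin.last m)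
    rw [Matrix.cramer_apply] at h2
    simpa [hvn] using h2.symm
  -- Step 2: pull out α
  have hbs : b = α • (Pi.single (0 : Fin (m + 1)) (1 : ℂ) : Fin (m + 1) → ℂ) := by
    funext j
    rcases eq_or_ne j 0 with rfl | hj
    · simp [hb]
    · have : (j : ℕ) ≠ 0 := fun h => hj (Fin.ext h)
      simp [hb, this, Pi.single_eq_of_ne hj, hj]
  set B : Matrix (Fin (m + 1)) (Fin (m + 1)) ℂ :=
    A.updateCol (Fin.last m) (Pi.single (0 : Fin (m + 1)) (1 : ℂ)) with hB
  have hstep2 : (A.updateCol (Fin.last m) b).det = α * B.det := by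
    rw [hbs, Matrix.det_updateCol_smul]
  -- Step 3: Laplace expansion of B along the last column
  have hBlast : ∀ i : Fin (m + 1), B i (Fin.last m) =
      (Pi.single (0 : Fin (m + 1)) (1 : ℂ) : Fin (m + 1) → ℂ) i := by
    intro i; simp [hB]
  have hexp : B.det = (-1 : ℂ) ^ m *
      (B.submatrix (Fin.succAbove 0) (Fin.succAbove (Fin.last m))).det := by
    rw [Matrix.det_succ_column B (Fin.last m)]
    rw [Finset.sum_eq_single (0 : Fin (m + 1))]
    · simp [hBlast]
    · intro i _ hi
      rw [hBlast, Pi.single_eq_of_ne hi]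
      ring
    · simp
  -- The minor is upper triangular
  set M : Matrix (Fin m) (Fin m) ℂ :=
    B.submatrix (Fin.succAbove 0) (Fin.succAbove (Fin.last m)) with hM
  have hMapply : ∀ i j : Fin m, M i j = A i.succ j.castSucc := by
    intro i j
    have hcs : Fin.succAbove (Fin.last m) j = j.castSucc := by
      simp [Fin.succAbove_last]
    have hne : (j.castSucc : Fin (m + 1)) ≠ Fin.last m := by
      simp [Fin.ext_iff]; omega
    have h0 : Fin.succAbove (0 : Fin (m + 1)) i = i.succ := Fin.succAbove_zero_apply i
    rw [hM, Matrix.submatrix_apply, hcs, h0, hB, Matrix.updateCol_apply, if_neg hne]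
  have hMtri : M.BlockTriangular id := by
    intro i j hij
    simp only [id] at hij
    rw [hMapply]
    have h1 : (i.succ : Fin (m + 1)) ≠ j.castSucc := by
      simp [Fin.ext_iff]; omega
    rw [hAoff _ _ h1, hHess i.succ j.castSucc (by simp; omega), neg_zero]
  have hMdet : M.det = ∏ i : Fin m, (- H i.succ i.castSucc) := by
    rw [Matrix.det_of_upperTriangular hMtri]
    refine Finset.prod_congr rfl fun i _ => ?_
    rw [hMapply]
    exact hAoff _ _ (by simp [Fin.ext_iff])
  -- Put it all together
  have hprod : ∏ i : Fin m, (- H i.succ i.castSucc) =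
      (-1 : ℂ) ^ m * ∏ i : Fin m, H i.succ i.castSucc := by
    have he : ∀ i : Fin m, -H i.succ i.castSucc = (-1 : ℂ) * H i.succ i.castSucc :=
      fun i => by ring
    rw [Finset.prod_congr rfl fun i _ => he i, Finset.prod_mul_distrib,
      Finset.prod_const, Finset.card_univ, Fintype.card_fin]
  have hgoalprod : (∏ i : Fin (m + 1 - 1),
        H ⟨(i : ℕ) + 1, by have := i.2; omega⟩ ⟨(i : ℕ), by have := i.2; omega⟩) =
      ∏ i : Fin m, H i.succ i.castSucc := by
    apply Finset.prod_congr rfl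
    intro i _
    congr 1
  calc A.det = A.det * v (Fin.last m) := by rw [hvn, mul_one]
    _ = (A.updateCol (Fin.last m) b).det := hcr
    _ = α * B.det := hstep2
    _ = α * ((-1 : ℂ) ^ m * M.det) := by rw [hexp]
    _ = α * ∏ i : Fin (m + 1 - 1),
        H ⟨(i : ℕ) + 1, by have := i.2; omega⟩ ⟨(i : ℕ), by have := i.2; omega⟩ := by
        rw [hMdet, hprod, hgoalprod, ← mul_assoc ((-1:ℂ)^m), ← pow_add]
        have h2 : (-1:ℂ)^(m+m) = 1 := by
          rw [← two_mul, pow_mul]; norm_num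
        rw [h2, one_mul]
end
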